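/- Let M(t) be the 3×3 matrix [[1, 1-1/t, 1], [1-1/t, 1, 1], [1, 1, 2t]] (the matrix R^t for n = 2, i.e. CP^3 = Sp(2)/Sp(1)×U(1)). Then M(t) is positive definite if and only if t > 1, and positive semidefinite if and only if t ≥ 1. -/

import Mathlib

private lemma aux_pd (t a b c : ℝ) (ht : 0 < t) (h1 : 1 < t)
    (hne : ¬(a = 0 ∧ b = 0 ∧ c = 0)) :
    0 < a*(a + (1-1/t)*b + c) + b*((1-1/t)*a + b + c) + c*(a + b + 2*t*c) := by
  have ht' : t ≠ 0 := ht.ne'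
  by_contra hq
  push_neg at hq
  set q := a*(a + (1-1/t)*b + c) + b*((1-1/t)*a + b + c) + c*(a + b + 2*t*c) with hqdef
  have e : t^2 * q = (t*a + (t-1)*b + t*c)^2 + (b + t*c)^2 + 2*(t-1)*(b^2 + (t*c)^2) := by
    rw [hqdef]; field_simp; ring
  have hS : (t*a + (t-1)*b + t*c)^2 + (b + t*c)^2 + 2*(t-1)*(b^2 + (t*c)^2) ≤ 0 := by
    rw [← e]; exact mul_nonpos_of_nonneg_of_nonpos (sq_nonneg t) hq
  have h1' : (0:ℝ) < t - 1 := by linarith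
  have hb : b = 0 := by
    have hb2 : b^2 ≤ 0 := by
      nlinarith [hS, sq_nonneg (t*a + (t-1)*b + t*c), sq_nonneg (b + t*c),
        mul_nonneg h1'.le (sq_nonneg (t*c)), h1']
    exact sq_eq_zero_iff.mp (le_antisymm hb2 (sq_nonneg b))
  subst hb
  have hc : c = 0 := by
    have hc2 : (t*c)^2 ≤ 0 := by
      nlinarith [hS, sq_nonneg (t*a + (t-1)*0 + t*c), sq_nonneg ((0:ℝ) + t*c), h1']
    have := sq_eq_zero_iff.mp (le_antisymm hc2 (sq_nonneg (t*c)))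
    rcases mul_eq_zero.mp this with h | h
    · exact absurd h ht'
    · exact h
  subst hc
  have ha : a = 0 := by
    have ha2 : (t*a)^2 ≤ 0 := by nlinarith [hS, h1']
    have := sq_eq_zero_iff.mp (le_antisymm ha2 (sq_nonneg (t*a)))
    rcases mul_eq_zero.mp this with h | h
    · exact absurd h ht'
    · exact h
  exact hne ⟨ha, rfl, rfl⟩

private lemma aux_psd (t a b c : ℝ) (ht : 0 < t) (h1 : 1 ≤ t) :
    0 ≤ a*(a + (1-1/t)*b + c) + b*((1-1/t)*a + b + c) + c*(a + b + 2*t*c) := by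
  have ht' : t ≠ 0 := ht.ne'
  set q := a*(a + (1-1/t)*b + c) + b*((1-1/t)*a + b + c) + c*(a + b + 2*t*c) with hqdef
  have e : t^2 * q = (t*a + (t-1)*b + t*c)^2 + (b + t*c)^2 + 2*(t-1)*(b^2 + (t*c)^2) := by
    rw [hqdef]; field_simp; ring
  nlinarith [e, sq_nonneg (t*a + (t-1)*b + t*c), sq_nonneg (b + t*c),
    mul_nonneg (by linarith : (0:ℝ) ≤ t - 1) (sq_nonneg b),
    mul_nonneg (by linarith : (0:ℝ) ≤ t - 1) (sq_nonneg (t*c)),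
    mul_pos ht ht]

/-- the matrix `R^t` for `n = 2` (i.e. `ℂP³ = Sp(2)/Sp(1)×U(1)`)
is positive definite iff `t > 1` and positive semidefinite iff `t ≥ 1`. -/
theorem stmt_19 (t : ℝ) (ht : 0 < t) :
    ((!![1, 1 - 1/t, 1; 1 - 1/t, 1, 1; 1, 1, 2*t] : Matrix (Fin 3) (Fin 3) ℝ).PosDef ↔ 1 < t) ∧
    ((!![1, 1 - 1/t, 1; 1 - 1/t, 1, 1; 1, 1, 2*t] : Matrix (Fin 3) (Fin 3) ℝ).PosSemidef ↔ 1 ≤ t) := by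
  have ht' : t ≠ 0 := ht.ne'
  have hinv : t * t⁻¹ = 1 := mul_inv_cancel₀ ht'
  have hupos : 0 < t⁻¹ := by positivity
  have hherm : (!![1, 1 - 1/t, 1; 1 - 1/t, 1, 1; 1, 1, 2*t] : Matrix (Fin 3) (Fin 3) ℝ).IsHermitian := by
    ext i j
    fin_cases i <;> fin_cases j <;>
      simp [Matrix.conjTranspose_apply, Matrix.vecHead, Matrix.vecTail]
  have hvne : (![1, 1, -1] : Fin 3 → ℝ) ≠ 0 := by
    intro hc; have := congrFun hc 0; simp at this
  constructor
  · constructor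
    · intro h
      have h2 := (Matrix.posDef_iff_dotProduct_mulVec.mp h).2 hvne
      simp [dotProduct, Matrix.mulVec, Fin.sum_univ_three,
        Matrix.vecHead, Matrix.vecTail] at h2
      nlinarith [h2, hinv, hupos, ht]
    · intro h1
      refine Matrix.posDef_iff_dotProduct_mulVec.mpr ⟨hherm, fun x hx => ?_⟩
      have hne : ¬(x 0 = 0 ∧ x 1 = 0 ∧ x 2 = 0) := by
        rintro ⟨h0, h1, h2⟩
        exact hx (funext fun i => by fin_cases i <;> assumption)
      have key := aux_pd t (x 0) (x 1) (x 2) ht h1 hne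
      simp [dotProduct, Matrix.mulVec, Fin.sum_univ_three,
        Matrix.vecHead, Matrix.vecTail]
      simp only [one_div] at key
      linarith [key]
  · constructor
    · intro h
      have h2 := (Matrix.posSemidef_iff_dotProduct_mulVec.mp h).2 (![1, 1, -1] : Fin 3 → ℝ)
      simp [dotProduct, Matrix.mulVec, Fin.sum_univ_three,
        Matrix.vecHead, Matrix.vecTail] at h2
      nlinarith [h2, hinv, hupos, ht]
    · intro h1
      refine Matrix.posSemidef_iff_dotProduct_mulVec.mpr ⟨hherm, fun x => ?_⟩
      have key := aux_psd t (x 0) (x 1) (x 2) ht h1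
      simp [dotProduct, Matrix.mulVec, Fin.sum_univ_three,
        Matrix.vecHead, Matrix.vecTail]
      simp only [one_div] at key
      linarith [key]
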